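/- arXiv:1611.08490 — 4 statements merged into one kernel-verified Lean document; each statement's English description precedes it below -/
import Mathlib

section
/- For every z ∈ ℂ with |z| ≤ r, the map τ(z) : A_r → [0,∞) is a multiplicative seminorm on A_r bounded by ‖·‖_{hyb,r}. -/
/-- The hybrid norm on `ℂ`: `|c|_hyb = max {1, |c|}` for `c ≠ 0`, and `|0|_hyb = 0`. -/
noncomputable def hybNorm (c : ℂ) : ℝ := if c = 0 then 0 else max 1 (‖c‖)

/-- The ring `A_r` of formal Laurent series `f = ∑ aₙ tⁿ` with
`∑ |aₙ|_hyb rⁿ < ∞`, viewed as a subset of `ℂ((t))`. -/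
def Ar (r : ℝ) : Set (LaurentSeries ℂ) :=
  {f | Summable fun n : ℤ => hybNorm (f.coeff n) * r ^ n}

/-- The hybrid norm `‖f‖_{hyb,r} = ∑ |aₙ|_hyb rⁿ` of a Laurent series. -/
noncomputable def hybnorm (r : ℝ) (f : LaurentSeries ℂ) : ℝ :=
  ∑' n : ℤ, hybNorm (f.coeff n) * r ^ n

open scoped Classical

/-- The sum of the Laurent series of `f` at a point `z ∈ ℂ`. -/
noncomputable def lEval (f : LaurentSeries ℂ) (z : ℂ) : ℂ :=
  ∑' n : ℤ, f.coeff n * z ^ n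

/-- The seminorm `τ(z)` on `A_r`: for `z = 0` it is `f ↦ r^{ord₀ f}` (with `0 ↦ 0`),
and for `0 < |z| ≤ r` it is `f ↦ |f(z)|^{log r / log |z|}`. -/
noncomputable def tau (r : ℝ) (z : ℂ) (f : LaurentSeries ℂ) : ℝ :=
  if z = 0 then (if f = 0 then 0 else r ^ f.order)
  else ‖lEval f z‖ ^ (Real.log r / Real.log (‖z‖))

/-- `N` is a multiplicative seminorm on the subset `S` of `ℂ((t))` (relativized to `S`):
`N 0 = 0`, `N 1 = 1`, `N` is nonnegative, multiplicative and subadditive on `S`. -/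
def IsMultSeminormOn (S : Set (LaurentSeries ℂ)) (N : LaurentSeries ℂ → ℝ) : Prop :=
  N 0 = 0 ∧ N 1 = 1 ∧ (∀ f ∈ S, 0 ≤ N f) ∧
    (∀ f ∈ S, ∀ g ∈ S, N (f * g) = N f * N g) ∧
    (∀ f ∈ S, ∀ g ∈ S, N (f + g) ≤ N f + N g)

-- auxiliary lemmas
lemma abs_le_hybNorm (c : ℂ) : ‖c‖ ≤ hybNorm c := by
  unfold hybNorm; split
  · simp_all
  · exact le_max_right _ _

lemma hybNorm_nonneg (c : ℂ) : 0 ≤ hybNorm c :=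
  (norm_nonneg c).trans (abs_le_hybNorm c)

lemma one_le_hybNorm {c : ℂ} (hc : c ≠ 0) : 1 ≤ hybNorm c := by
  unfold hybNorm; rw [if_neg hc]; exact le_max_left _ _

lemma rpow_le_hybNorm {c : ℂ} {p : ℝ} (hp0 : 0 < p) (hp1 : p ≤ 1) :
    ‖c‖ ^ p ≤ hybNorm c := by
  rcases eq_or_ne c 0 with rfl | hc
  · simp [hybNorm, Real.zero_rpow hp0.ne']
  · rcases le_total (‖c‖) 1 with h | h
    · calc ‖c‖ ^ p ≤ 1 := Real.rpow_le_one (norm_nonneg c) h hp0.le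
        _ ≤ hybNorm c := one_le_hybNorm hc
    · calc ‖c‖ ^ p ≤ ‖c‖ ^ (1:ℝ) :=
          Real.rpow_le_rpow_of_exponent_le h hp1
        _ = ‖c‖ := Real.rpow_one _
        _ ≤ hybNorm c := abs_le_hybNorm c

lemma summable_norm_eval {r : ℝ} (hr0 : 0 < r) {z : ℂ} (hz0 : z ≠ 0)
    (hzr : ‖z‖ ≤ r) {f : LaurentSeries ℂ} (hf : f ∈ Ar r) :
    Summable fun n : ℤ => ‖f.coeff n * z ^ n‖ := by
  set a := ‖z‖ with ha_def
  have ha : 0 < a := norm_pos_iff.mpr hz0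
  set C := (a / r) ^ f.order with hC
  refine Summable.of_nonneg_of_le (fun n => norm_nonneg _) (fun n => ?_)
    ((Summable.mul_left C hf))
  rcases eq_or_ne (f.coeff n) 0 with h | h
  · simp [h, hybNorm]
  · have hord : f.order ≤ n := HahnSeries.order_le_of_coeff_ne_zero h
    have h1 : ‖f.coeff n * z ^ n‖ = ‖f.coeff n‖ * a ^ n := by
      rw [norm_mul, norm_zpow]
    have h2 : (a / r) ^ n ≤ C :=
      zpow_le_zpow_right_of_le_one₀ (div_pos ha hr0) ((div_le_one hr0).mpr hzr) hord
    have h3 : a ^ n = (a / r) ^ n * r ^ n := by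
      rw [div_zpow, div_mul_cancel₀]
      exact zpow_ne_zero _ hr0.ne'
    rw [h1, h3]
    calc ‖f.coeff n‖ * ((a / r) ^ n * r ^ n)
        ≤ hybNorm (f.coeff n) * (C * r ^ n) := by
          apply mul_le_mul (abs_le_hybNorm _)
            (mul_le_mul_of_nonneg_right h2 (zpow_nonneg hr0.le _))
            (mul_nonneg (zpow_nonneg (div_pos ha hr0).le _) (zpow_nonneg hr0.le _))
            (hybNorm_nonneg _)
      _ = C * (hybNorm (f.coeff n) * r ^ n) := by ring

lemma hasSum_lEval {z : ℂ} {f : LaurentSeries ℂ}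
    (h : Summable fun n : ℤ => ‖f.coeff n * z ^ n‖) :
    HasSum (fun n : ℤ => f.coeff n * z ^ n) (lEval f z) := by
  unfold lEval; exact h.of_norm.hasSum

set_option maxHeartbeats 1000000 in
lemma lEval_mul {r : ℝ} (hr0 : 0 < r) {z : ℂ} (hz0 : z ≠ 0) (hzr : ‖z‖ ≤ r)
    {f g : LaurentSeries ℂ} (hf : f ∈ Ar r) (hg : g ∈ Ar r) :
    lEval (f * g) z = lEval f z * lEval g z := by
  have hF := summable_norm_eval hr0 hz0 hzr hf
  have hG := summable_norm_eval hr0 hz0 hzr hg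
  have hFG := summable_mul_of_summable_norm hF hG
  have hmul := (hasSum_lEval hF).mul (hasSum_lEval hG) hFG
  have hfib := hmul.tsum_fiberwise (fun p => p.1 + p.2)
  have key : ∀ n : ℤ, (∑' p : (fun p : ℤ × ℤ => p.1 + p.2) ⁻¹' {n},
      f.coeff (p : ℤ × ℤ).1 * z ^ (p : ℤ × ℤ).1 * (g.coeff (p : ℤ × ℤ).2 * z ^ (p : ℤ × ℤ).2))
      = (f * g).coeff n * z ^ n := by
    intro n
    rw [tsum_subtype ((fun p : ℤ × ℤ => p.1 + p.2) ⁻¹' ({n} : Set ℤ))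
      (fun p : ℤ × ℤ => f.coeff p.1 * z ^ p.1 * (g.coeff p.2 * z ^ p.2))]
    rw [tsum_eq_sum (s := Finset.addAntidiagonal f.isPWO_support g.isPWO_support n)
      (f := fun p : ℤ × ℤ => Set.indicator ((fun p : ℤ × ℤ => p.1 + p.2) ⁻¹' ({n} : Set ℤ))
        (fun p : ℤ × ℤ => f.coeff p.1 * z ^ p.1 * (g.coeff p.2 * z ^ p.2)) p) ?_]
    · rw [HahnSeries.coeff_mul, Finset.sum_mul]
      apply Finset.sum_congr rfl
      intro p hp
      beta_reduce
      obtain ⟨h1, h2, h3⟩ := Finset.mem_addAntidiagonal.mp hp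
      rw [Set.indicator_of_mem (by simpa using h3), ← h3, zpow_add₀ hz0]
      ring
    · intro p hp
      beta_reduce
      by_cases hpn : p.1 + p.2 = n
      · rw [Set.indicator_of_mem (by simpa using hpn)]
        have : f.coeff p.1 = 0 ∨ g.coeff p.2 = 0 := by
          by_contra hcon
          push_neg at hcon
          exact hp (Finset.mem_addAntidiagonal.mpr ⟨hcon.1, hcon.2, hpn⟩)
        rcases this with h | h <;> simp [h]
      · exact Set.indicator_of_notMem (by simpa using hpn) _
  have h2 : HasSum (fun n : ℤ => (f * g).coeff n * z ^ n) (lEval f z * lEval g z) := by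
    simpa only [key] using hfib
  exact h2.tsum_eq

lemma lEval_add {z : ℂ} {f g : LaurentSeries ℂ}
    (hF : Summable fun n : ℤ => ‖f.coeff n * z ^ n‖)
    (hG : Summable fun n : ℤ => ‖g.coeff n * z ^ n‖) :
    lEval (f + g) z = lEval f z + lEval g z := by
  have : ∀ n : ℤ, (f + g).coeff n * z ^ n = f.coeff n * z ^ n + g.coeff n * z ^ n := by
    intro n; rw [HahnSeries.coeff_add]; ring
  unfold lEval
  rw [tsum_congr this, Summable.tsum_add hF.of_norm hG.of_norm]

lemma real_rpow_add_le {a b p : ℝ} (ha : 0 ≤ a) (hb : 0 ≤ b) (hp : 0 ≤ p) (hp1 : p ≤ 1) :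
    (a + b) ^ p ≤ a ^ p + b ^ p := by
  have h := NNReal.rpow_add_le_add_rpow a.toNNReal b.toNNReal hp hp1
  have h2 := NNReal.coe_le_coe.mpr h
  rw [NNReal.coe_add, NNReal.coe_rpow, NNReal.coe_rpow, NNReal.coe_rpow,
    ← Real.toNNReal_add ha hb, Real.coe_toNNReal _ (add_nonneg ha hb),
    Real.coe_toNNReal _ ha, Real.coe_toNNReal _ hb] at h2
  exact h2

lemma rpow_tsum_le {x : ℤ → ℝ} (hx : ∀ n, 0 ≤ x n) (hsx : Summable x)
    {p : ℝ} (hp : 0 < p) (hp1 : p ≤ 1) (hsp : Summable fun n => x n ^ p) :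
    (∑' n, x n) ^ p ≤ ∑' n, x n ^ p := by
  have hfin : ∀ s : Finset ℤ, (∑ n ∈ s, x n) ^ p ≤ ∑ n ∈ s, x n ^ p := by
    intro s
    induction s using Finset.induction with
    | empty => simp [Real.zero_rpow hp.ne']
    | insert a s hni ih =>
        rw [Finset.sum_insert hni, Finset.sum_insert hni]
        calc (x a + ∑ n ∈ s, x n) ^ p ≤ x a ^ p + (∑ n ∈ s, x n) ^ p :=
              real_rpow_add_le (hx _) (Finset.sum_nonneg fun i _ => hx i) hp.le hp1
          _ ≤ x a ^ p + ∑ n ∈ s, x n ^ p := add_le_add_right ih _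
  have h1 : Filter.Tendsto (fun s : Finset ℤ => (∑ n ∈ s, x n) ^ p) Filter.atTop
      (nhds ((∑' n, x n) ^ p)) :=
    ((Real.continuousAt_rpow_const _ p (Or.inr hp.le)).tendsto).comp hsx.hasSum
  exact le_of_tendsto h1 (Filter.Eventually.of_forall fun s =>
    (hfin s).trans (Summable.sum_le_tsum s (fun i _ => Real.rpow_nonneg (hx i) p) hsp))


/-- For every `z` with `|z| ≤ r`, the map `τ(z)` is a multiplicative
seminorm on `A_r` bounded by `‖·‖_{hyb,r}`. -/
theorem tau_isMultSeminorm (r : ℝ) (hr0 : 0 < r) (hr1 : r < 1)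
    (z : ℂ) (hz : ‖z‖ ≤ r) :
    IsMultSeminormOn (Ar r) (tau r z) ∧ ∀ f ∈ Ar r, tau r z f ≤ hybnorm r f := by
  by_cases hz0 : z = 0
  · subst hz0
    have tau0 : ∀ f : LaurentSeries ℂ, tau r 0 f = if f = 0 then 0 else r ^ f.order := by
      intro f; unfold tau; rw [if_pos rfl]
    have nn : ∀ h : LaurentSeries ℂ, 0 ≤ (if h = 0 then (0:ℝ) else r ^ h.order) := by
      intro h; split
      · exact le_refl 0
      · exact zpow_nonneg hr0.le _
    constructor
    · refine ⟨?_, ?_, ?_, ?_, ?_⟩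
      · rw [tau0, if_pos rfl]
      · rw [tau0, if_neg one_ne_zero, HahnSeries.order_one, zpow_zero]
      · intro f _
        rw [tau0]
        exact nn f
      · intro f _ g _
        rw [tau0, tau0, tau0]
        by_cases hf0 : f = 0
        · simp [hf0]
        · by_cases hg0 : g = 0
          · simp [hg0]
          · rw [if_neg hf0, if_neg hg0, if_neg (mul_ne_zero hf0 hg0),
              HahnSeries.order_mul hf0 hg0, zpow_add₀ hr0.ne']
      · intro f _ g _
        rw [tau0, tau0, tau0]
        by_cases hfg : f + g = 0
        · rw [if_pos hfg]; exact add_nonneg (nn f) (nn g)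
        · rw [if_neg hfg]
          by_cases hf0 : f = 0
          · subst hf0
            have hg0 : g ≠ 0 := by simpa using hfg
            rw [if_neg hg0, if_pos rfl, zero_add, zero_add]
          · by_cases hg0 : g = 0
            · subst hg0
              rw [if_neg hf0, if_pos rfl, add_zero, add_zero]
            · rw [if_neg hf0, if_neg hg0]
              have hmin := HahnSeries.min_order_le_order_add hfg
              have h1 : r ^ (f + g).order ≤ r ^ min f.order g.order :=
                zpow_le_zpow_right_of_le_one₀ hr0 hr1.le hmin
              refine h1.trans ?_
              rcases le_total f.order g.order with h | h
              · rw [min_eq_left h]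
                exact le_add_of_nonneg_right (zpow_nonneg hr0.le _)
              · rw [min_eq_right h]
                exact le_add_of_nonneg_left (zpow_nonneg hr0.le _)
    · intro f hf
      rw [tau0]
      split
      · exact tsum_nonneg fun n => mul_nonneg (hybNorm_nonneg _) (zpow_nonneg hr0.le _)
      · rename_i hfne
        calc r ^ f.order ≤ hybNorm (f.coeff f.order) * r ^ f.order := by
              nth_rewrite 1 [← one_mul (r ^ f.order)]
              exact mul_le_mul_of_nonneg_right
                (one_le_hybNorm (HahnSeries.coeff_order_eq_zero.not.2 hfne))
                (zpow_nonneg hr0.le _)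
          _ ≤ hybnorm r f := Summable.le_tsum hf f.order
              (fun n _ => mul_nonneg (hybNorm_nonneg _) (zpow_nonneg hr0.le _))
  · -- z ≠ 0
    set p := Real.log r / Real.log (‖z‖) with hp_def
    have ha : 0 < ‖z‖ := norm_pos_iff.mpr hz0
    have ha1 : ‖z‖ < 1 := lt_of_le_of_lt hz hr1
    have hlogz : Real.log (‖z‖) < 0 := Real.log_neg ha ha1
    have hlogr : Real.log r < 0 := Real.log_neg hr0 hr1
    have hp : 0 < p := div_pos_of_neg_of_neg hlogr hlogz
    have hp1 : p ≤ 1 := by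
      rw [hp_def, div_le_one_iff]
      exact Or.inr (Or.inr ⟨hlogz, Real.log_le_log ha hz⟩)
    have hap : ‖z‖ ^ p = r := by
      rw [Real.rpow_def_of_pos ha, hp_def]
      have h1 : Real.log (‖z‖) * (Real.log r / Real.log (‖z‖))
          = Real.log r := by
        rw [mul_comm, div_mul_cancel₀ _ (ne_of_lt hlogz)]
      rw [h1, Real.exp_log hr0]
    have hzpow : ∀ n : ℤ, (‖z‖ ^ n) ^ p = r ^ n := by
      intro n
      rw [← Real.rpow_intCast (‖z‖) n, ← Real.rpow_mul ha.le, mul_comm,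
        Real.rpow_mul ha.le, hap, Real.rpow_intCast]
    have tau_eq : ∀ f : LaurentSeries ℂ, tau r z f = ‖lEval f z‖ ^ p := by
      intro f; simp only [tau, if_neg hz0, hp_def]
    constructor
    · refine ⟨?_, ?_, ?_, ?_, ?_⟩
      · have h0 : lEval 0 z = 0 := by
          unfold lEval
          simp [HahnSeries.coeff_zero]
        rw [tau_eq, h0, norm_zero, Real.zero_rpow hp.ne']
      · have h1 : lEval 1 z = 1 := by
          unfold lEval
          have : ∀ n : ℤ, (1 : LaurentSeries ℂ).coeff n * z ^ n
              = if n = 0 then 1 else 0 := by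
            intro n
            rw [HahnSeries.coeff_one]
            split <;> simp_all
          rw [tsum_congr this, tsum_ite_eq]
        rw [tau_eq, h1, norm_one, Real.one_rpow]
      · intro f _
        rw [tau_eq]
        exact Real.rpow_nonneg (norm_nonneg _) _
      · intro f hf g hg
        rw [tau_eq, tau_eq, tau_eq, lEval_mul hr0 hz0 hz hf hg, norm_mul,
          Real.mul_rpow (norm_nonneg _) (norm_nonneg _)]
      · intro f hf g hg
        rw [tau_eq, tau_eq, tau_eq,
          lEval_add (summable_norm_eval hr0 hz0 hz hf) (summable_norm_eval hr0 hz0 hz hg)]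
        calc ‖lEval f z + lEval g z‖ ^ p
            ≤ (‖lEval f z‖ + ‖lEval g z‖) ^ p :=
              Real.rpow_le_rpow (norm_nonneg _) (norm_add_le _ _) hp.le
          _ ≤ ‖lEval f z‖ ^ p + ‖lEval g z‖ ^ p :=
              real_rpow_add_le (norm_nonneg _) (norm_nonneg _) hp.le hp1
    · intro f hf
      have hF := summable_norm_eval hr0 hz0 hz hf
      have hterm : ∀ n : ℤ, ‖f.coeff n * z ^ n‖ ^ p ≤ hybNorm (f.coeff n) * r ^ n := by
        intro n
        rw [norm_mul, norm_zpow,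
          Real.mul_rpow (norm_nonneg _) (zpow_nonneg ha.le _), hzpow n]
        exact mul_le_mul_of_nonneg_right (rpow_le_hybNorm hp hp1) (zpow_nonneg hr0.le n)
      have hsp : Summable fun n : ℤ => ‖f.coeff n * z ^ n‖ ^ p :=
        Summable.of_nonneg_of_le (fun n => Real.rpow_nonneg (norm_nonneg _) _) hterm hf
      rw [tau_eq]
      calc ‖lEval f z‖ ^ p ≤ (∑' n : ℤ, ‖f.coeff n * z ^ n‖) ^ p := by
            apply Real.rpow_le_rpow (norm_nonneg _) ?_ hp.le
            unfold lEval
            exact norm_tsum_le_tsum_norm hF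
        _ ≤ ∑' n : ℤ, ‖f.coeff n * z ^ n‖ ^ p :=
            rpow_tsum_le (fun n => norm_nonneg _) hF hp hp1 hsp
        _ ≤ hybnorm r f := Summable.tsum_le_tsum hterm hsp hf
end

section
/- The map τ is injective: if z, w ∈ D̄_r and z ≠ w, then there exists f ∈ A_r with τ(z)(f) ≠ τ(w)(f). -/
open scoped Classical

lemma coeff_aux (a : ℂ) (n : ℤ) :
    ((HahnSeries.single (1:ℤ) (1:ℂ)) - HahnSeries.single 0 a).coeff n
      = (if n = 1 then 1 else 0) - (if n = 0 then a else 0) := by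
  simp only [HahnSeries.coeff_sub, HahnSeries.coeff_single, Pi.sub_apply]
  split_ifs <;> simp

lemma coeff_aux' (a : ℂ) (n : ℤ) (h0 : n ≠ 0) (h1 : n ≠ 1) :
    ((HahnSeries.single (1:ℤ) (1:ℂ)) - HahnSeries.single 0 a).coeff n = 0 := by
  simp [coeff_aux, h0, h1]

lemma lEval_aux (a b : ℂ) :
    lEval ((HahnSeries.single (1:ℤ) (1:ℂ)) - HahnSeries.single 0 a) b = b - a := by
  unfold lEval
  rw [tsum_eq_sum (s := ({0, 1} : Finset ℤ)) (by
    intro n hn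
    simp only [Finset.mem_insert, Finset.mem_singleton, not_or] at hn
    rw [coeff_aux' a n hn.1 hn.2, zero_mul])]
  rw [Finset.sum_insert (by norm_num), Finset.sum_singleton]
  simp [coeff_aux]
  ring

lemma single_ne (a : ℂ) :
    ((HahnSeries.single (1:ℤ) (1:ℂ)) - HahnSeries.single 0 a) ≠ 0 := by
  intro h
  have := congrArg (fun f => HahnSeries.coeff f 1) h
  simp [coeff_aux] at this

lemma mem_Ar (r : ℝ) (a : ℂ) :
    ((HahnSeries.single (1:ℤ) (1:ℂ)) - HahnSeries.single 0 a) ∈ Ar r := by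
  refine summable_of_ne_finset_zero (s := ({0, 1} : Finset ℤ)) ?_
  intro n hn
  simp only [Finset.mem_insert, Finset.mem_singleton, not_or] at hn
  rw [coeff_aux' a n hn.1 hn.2]
  simp [hybNorm]

lemma tau_self (r : ℝ) (hr0 : 0 < r) (hr1 : r < 1) (a : ℂ) (ha : a ≠ 0)
    (har : ‖a‖ ≤ r) :
    tau r a ((HahnSeries.single (1:ℤ) (1:ℂ)) - HahnSeries.single 0 a) = 0 := by
  rw [tau, if_neg ha, lEval_aux, sub_self, norm_zero]
  apply Real.zero_rpow
  have habs : 0 < ‖a‖ := by simpa [norm_pos_iff] using ha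
  have h1 : Real.log r ≠ 0 := Real.log_ne_zero_of_pos_of_ne_one hr0 (ne_of_lt hr1)
  have h2 : Real.log (‖a‖) ≠ 0 :=
    Real.log_ne_zero_of_pos_of_ne_one habs (by linarith)
  exact div_ne_zero h1 h2

lemma tau_other (r : ℝ) (hr0 : 0 < r) (a b : ℂ) (hab : b ≠ a) :
    tau r b ((HahnSeries.single (1:ℤ) (1:ℂ)) - HahnSeries.single 0 a) ≠ 0 := by
  by_cases hb : b = 0
  · rw [tau, if_pos hb, if_neg (single_ne a)]
    exact zpow_ne_zero _ (ne_of_gt hr0)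
  · rw [tau, if_neg hb, lEval_aux]
    have : 0 < ‖b - a‖ := by
      simpa [norm_pos_iff, sub_ne_zero] using hab
    exact ne_of_gt (Real.rpow_pos_of_pos this _)

/-- The map `τ` is injective on the closed disk of radius `r`:
distinct points give distinct seminorms on `A_r`. -/
theorem tau_injective (r : ℝ) (hr0 : 0 < r) (hr1 : r < 1)
    (z w : ℂ) (hz : ‖z‖ ≤ r) (hw : ‖w‖ ≤ r) (hzw : z ≠ w) :
    ∃ f ∈ Ar r, tau r z f ≠ tau r w f := by
  by_cases hz0 : z = 0
  · refine ⟨_, mem_Ar r w, ?_⟩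
    rw [tau_self r hr0 hr1 w (fun h => hzw (hz0.trans h.symm)) hw]
    exact tau_other r hr0 w z hzw
  · refine ⟨_, mem_Ar r z, ?_⟩
    rw [tau_self r hr0 hr1 z hz0 hz]
    exact (tau_other r hr0 z w hzw.symm).symm
end

section
/- For every f ∈ A_r, the map z ↦ τ(z)(f) is continuous on the closed disk D̄_r; in particular, for every nonzero f ∈ A_r one has |f(z)|^{log r / log |z|} → r^{ord_0(f)} as z → 0 with z ≠ 0. -/
open scoped Classical

lemma zpow_rpow_log (r : ℝ) (hr0 : 0 < r) (x : ℝ) (hx0 : 0 < x) (hx : Real.log x ≠ 0) (m : ℤ) :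
    (x ^ m) ^ (Real.log r / Real.log x) = r ^ m := by
  rw [← Real.rpow_intCast x m, ← Real.rpow_mul hx0.le, Real.rpow_def_of_pos hx0]
  have h : Real.log x * ((m : ℝ) * (Real.log r / Real.log x)) = (m : ℝ) * Real.log r := by
    field_simp
  rw [h, ← Real.rpow_intCast r m, Real.rpow_def_of_pos hr0, mul_comm]

lemma tendsto_E (r : ℝ) :
    Filter.Tendsto (fun z : ℂ => Real.log r / Real.log (‖z‖))
      (nhdsWithin 0 {0}ᶜ) (nhds 0) := by
  have habs : Filter.Tendsto (fun z : ℂ => ‖z‖) (nhdsWithin 0 {0}ᶜ)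
      (nhdsWithin 0 {0}ᶜ) := by
    rw [tendsto_nhdsWithin_iff]
    constructor
    · exact (continuous_norm.tendsto' 0 0 (by simp)).mono_left nhdsWithin_le_nhds
    · filter_upwards [self_mem_nhdsWithin] with z hz
      simpa using hz
  have h1 : Filter.Tendsto (fun z : ℂ => Real.log (‖z‖))
      (nhdsWithin 0 {0}ᶜ) Filter.atBot := Real.tendsto_log_nhdsNE_zero.comp habs
  have h2 : Filter.Tendsto (fun z : ℂ => -Real.log (‖z‖))
      (nhdsWithin 0 {0}ᶜ) Filter.atTop := Filter.tendsto_neg_atBot_atTop.comp h1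
  have h3 := tendsto_inv_atTop_zero.comp h2
  have h4 := h3.const_mul (-Real.log r)
  rw [mul_zero] at h4
  refine h4.congr fun z => ?_
  simp only [Function.comp, div_eq_mul_inv, neg_mul, inv_neg, mul_neg, neg_neg]


/-- For `f ∈ A_r`, `z ↦ τ(z)(f)` is continuous on the closed disk `|z| ≤ r`;
in particular for `f ≠ 0` one has `|f(z)|^{log r / log |z|} → r^{ord₀ f}` as `z → 0`, `z ≠ 0`. -/
theorem tau_continuous (r : ℝ) (hr0 : 0 < r) (hr1 : r < 1)
    (f : LaurentSeries ℂ) (hf : f ∈ Ar r) :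
    ContinuousOn (fun z => tau r z f) {z : ℂ | ‖z‖ ≤ r} ∧
    (f ≠ 0 →
      Filter.Tendsto
        (fun z : ℂ => ‖lEval f z‖ ^ (Real.log r / Real.log (‖z‖)))
        (nhdsWithin 0 {0}ᶜ) (nhds (r ^ f.order))) := by
  set S : Set ℂ := {z : ℂ | ‖z‖ ≤ r} with hS
  have hlogr : Real.log r < 0 := Real.log_neg hr0 hr1
  -- positivity of the exponent on the punctured disk
  have hEpos : ∀ z : ℂ, z ≠ 0 → ‖z‖ ≤ r →
      0 < Real.log r / Real.log (‖z‖) := by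
    intro z hz hzr
    have habs : 0 < ‖z‖ := by simpa [norm_pos_iff] using hz
    have hlogz : Real.log (‖z‖) < 0 := Real.log_neg habs (lt_of_le_of_lt hzr hr1)
    exact div_pos_of_neg_of_neg hlogr hlogz
  by_cases hf0 : f = 0
  · subst hf0
    constructor
    · apply continuousOn_const (c := (0:ℝ)) |>.congr
      intro z hz
      by_cases hz0 : z = 0
      · simp [tau, hz0]
      · have hE := hEpos z hz0 hz
        have : lEval 0 z = 0 := by simp [lEval]
        simp [tau, hz0, this, Real.zero_rpow (ne_of_gt hE)]
    · intro h; exact absurd rfl h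
  · -- f ≠ 0
    set m : ℤ := f.order with hm
    set c : ℕ → ℂ := fun n => f.coeff (m + n) with hc
    set F : ℂ → ℂ := fun z => ∑' n : ℕ, c n * z ^ n with hFdef
    set E : ℂ → ℝ := fun z => Real.log r / Real.log (‖z‖) with hE
    -- summability of the coefficient bound
    have hsum0 : Summable fun n : ℤ => ‖f.coeff n‖ * r ^ n := by
      refine Summable.of_nonneg_of_le (fun n => ?_) (fun n => ?_) hf
      · positivity
      · apply mul_le_mul_of_nonneg_right _ (zpow_nonneg hr0.le n)
        by_cases h : f.coeff n = 0
        · simp [h, hybNorm]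
        · simp only [hybNorm, h, if_neg]
          exact le_max_right _ _
    have hinj : Function.Injective fun n : ℕ => m + (n : ℤ) := by
      intro a b hab
      simpa using hab
    have hsum1 : Summable fun n : ℕ => ‖f.coeff (m + n)‖ * r ^ (m + (n:ℤ)) :=
      hsum0.comp_injective hinj
    have hsum2 : Summable fun n : ℕ => ‖c n‖ * r ^ n := by
      have := hsum1.mul_left (r ^ (-m))
      refine this.congr fun n => ?_
      have h1 : r ^ (m + (n:ℤ)) = r ^ m * r ^ n := by
        rw [zpow_add₀ (ne_of_gt hr0), zpow_natCast]
      rw [h1, zpow_neg]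
      field_simp
      simp only [hc]
    -- continuity of F on S
    have hFcont : ContinuousOn F S := by
      apply continuousOn_tsum (u := fun n => ‖c n‖ * r ^ n)
      · intro i; exact (continuous_const.mul (continuous_pow i)).continuousOn
      · exact hsum2
      · intro n z hz
        rw [hS] at hz
        simp only [Set.mem_setOf_eq] at hz
        rw [norm_mul, norm_pow]
        exact mul_le_mul_of_nonneg_left (pow_le_pow_left₀ (norm_nonneg z) hz n)
          (norm_nonneg _)
    have hF0 : F 0 = f.coeff m := by
      have h0 : F 0 = ∑' n : ℕ, c n * (0:ℂ) ^ n := rfl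
      rw [h0, tsum_eq_single 0 (fun n hn => by simp [zero_pow hn])]
      simp [hc]
    have hF0ne : F 0 ≠ 0 := by
      rw [hF0]; exact HahnSeries.coeff_order_eq_zero.not.2 hf0
    -- lEval in terms of F
    have hlEval : ∀ z : ℂ, z ≠ 0 → lEval f z = z ^ m * F z := by
      intro z hz
      have hsupp : (Function.support fun n : ℤ => f.coeff n * z ^ n) ⊆
          Set.range fun n : ℕ => m + (n : ℤ) := by
        intro n hn
        have hcoeff : f.coeff n ≠ 0 := by
          intro h; apply hn; simp [h]
        have hmn : m ≤ n := by
          by_contra h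
          exact hcoeff (HahnSeries.coeff_eq_zero_of_lt_order (lt_of_not_ge h))
        refine ⟨(n - m).toNat, ?_⟩
        show m + ((n - m).toNat : ℤ) = n
        omega
      rw [lEval, ← hinj.tsum_eq hsupp]
      rw [← tsum_mul_left]
      congr 1
      ext n
      rw [zpow_add₀ hz, zpow_natCast, hc]
      ring
    -- the formula for tau off zero
    have htau : ∀ z : ℂ, z ≠ 0 → ‖z‖ ≤ r →
        ‖lEval f z‖ ^ E z = r ^ m * ‖F z‖ ^ E z := by
      intro z hz hzr
      have habs : 0 < ‖z‖ := by simpa [norm_pos_iff] using hz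
      have hlogz : Real.log (‖z‖) ≠ 0 :=
        ne_of_lt (Real.log_neg habs (lt_of_le_of_lt hzr hr1))
      rw [hlEval z hz, norm_mul, norm_zpow]
      rw [Real.mul_rpow (zpow_nonneg (norm_nonneg z) m) (norm_nonneg _)]
      rw [zpow_rpow_log r hr0 _ habs hlogz]
    -- continuity of the exponent within S
    have hEcont : ∀ x ∈ S, ContinuousWithinAt E S x := by
      intro x hx
      by_cases hx0 : x = 0
      · subst hx0
        rw [← continuousWithinAt_diff_self]
        have hE0 : E 0 = 0 := by simp [hE]
        rw [ContinuousWithinAt, hE0]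
        exact (tendsto_E r).mono_left (nhdsWithin_mono _ fun z hz => hz.2)
      · have habs : 0 < ‖x‖ := by simpa [norm_pos_iff] using hx0
        have hlogx : Real.log (‖x‖) ≠ 0 :=
          ne_of_lt (Real.log_neg habs (lt_of_le_of_lt hx hr1))
        apply ContinuousAt.continuousWithinAt
        exact (continuousAt_const.div
          ((Real.continuousAt_log (ne_of_gt habs)).comp continuous_norm.continuousAt)
          hlogx)
    -- continuity of the model function
    have htau'cont : ContinuousOn (fun z => r ^ m * ‖F z‖ ^ E z) S := by
      intro x hx
      refine (continuousWithinAt_const.mul ?_)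
      have hFx : ContinuousWithinAt (fun z => ‖F z‖) S x :=
        (continuous_norm.continuousAt).comp_continuousWithinAt (hFcont x hx)
      refine hFx.rpow (hEcont x hx) ?_
      by_cases hx0 : x = 0
      · left; rw [hx0]; simpa using hF0ne
      · right; exact hEpos x hx0 hx
    have htaueq : Set.EqOn (fun z => r ^ m * ‖F z‖ ^ E z)
        (fun z => tau r z f) S := by
      intro z hz
      by_cases hz0 : z = 0
      · subst hz0
        have : E (0:ℂ) = 0 := by simp [hE]
        simp [tau, hf0, this, Real.rpow_zero, hm]
      · simp only [tau, hz0, if_neg, ite_false]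
        exact (htau z hz0 hz).symm
    constructor
    · exact htau'cont.congr fun z hz => (htaueq hz).symm
    · intro _
      -- S is a neighbourhood of 0
      have hSnhds : S ∈ nhds (0 : ℂ) := by
        have : S = Metric.closedBall (0:ℂ) r := by
          ext z; simp [hS, Metric.mem_closedBall, Complex.dist_eq]
        rw [this]
        exact Metric.closedBall_mem_nhds 0 hr0
      have hmem : S ∈ nhdsWithin (0:ℂ) {0}ᶜ := mem_nhdsWithin_of_mem_nhds hSnhds
      -- tendsto of the model function along 𝓝[≠]0
      have h1 : Filter.Tendsto (fun z => r ^ m * ‖F z‖ ^ E z)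
          (nhdsWithin (0:ℂ) {0}ᶜ) (nhds (r ^ m)) := by
        have hFlim : Filter.Tendsto (fun z => ‖F z‖) (nhdsWithin (0:ℂ) {0}ᶜ)
            (nhds (‖F 0‖)) := by
          have hF0cont : ContinuousWithinAt F S 0 := hFcont 0 (by simp [hS, hr0.le])
          have : Filter.Tendsto F (nhdsWithin (0:ℂ) {0}ᶜ) (nhds (F 0)) := by
            refine hF0cont.tendsto.mono_left ?_
            rw [← nhdsWithin_inter_of_mem' hmem]
            exact nhdsWithin_mono _ Set.inter_subset_right
          exact (continuous_norm.continuousAt.tendsto).comp this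
        have hrpow : Filter.Tendsto (fun z => ‖F z‖ ^ E z)
            (nhdsWithin (0:ℂ) {0}ᶜ) (nhds 1) := by
          have := (Real.continuousAt_rpow (‖F 0‖, 0)
            (Or.inl (by simpa using hF0ne))).tendsto
          have hcomp := this.comp (hFlim.prodMk_nhds (tendsto_E r))
          simpa [Real.rpow_zero, Function.comp_def] using hcomp
        have := hrpow.const_mul (r ^ m)
        simpa using this
      refine h1.congr' ?_
      filter_upwards [hmem, self_mem_nhdsWithin] with z hzS hz0
      exact (htau z hz0 hzS).symm
end

section
/- Every multiplicative seminorm N on A_r that is bounded by ‖·‖_{hyb,r} satisfies N(t) = r, where t denotes the Laurent series t ∈ A_r. -/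
open scoped Classical

lemma hasSum_hyb_single (r : ℝ) (n : ℤ) :
    HasSum (fun m : ℤ => hybNorm ((HahnSeries.single n (1 : ℂ)).coeff m) * r ^ m) (r ^ n) := by
  have h : (fun m : ℤ => hybNorm ((HahnSeries.single n (1 : ℂ)).coeff m) * r ^ m)
      = fun m : ℤ => if m = n then r ^ n else 0 := by
    funext m
    rw [HahnSeries.coeff_single]
    by_cases hmn : m = n <;> simp [hmn, hybNorm]
  rw [h]
  exact hasSum_ite_eq n (r ^ n)

lemma single_mem_Ar (r : ℝ) (n : ℤ) : HahnSeries.single n (1 : ℂ) ∈ Ar r :=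
  (hasSum_hyb_single r n).summable

lemma hybnorm_single (r : ℝ) (n : ℤ) : hybnorm r (HahnSeries.single n (1 : ℂ)) = r ^ n :=
  (hasSum_hyb_single r n).tsum_eq

/-- Every multiplicative seminorm on `A_r` bounded by `‖·‖_{hyb,r}`
sends the Laurent series `t` to `r`. -/
theorem seminorm_t_eq_r (r : ℝ) (hr0 : 0 < r) (hr1 : r < 1)
    (N : LaurentSeries ℂ → ℝ) (hN : IsMultSeminormOn (Ar r) N)
    (hbd : ∀ f ∈ Ar r, N f ≤ hybnorm r f) :
    N (HahnSeries.single (1 : ℤ) (1 : ℂ)) = r := by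
  obtain ⟨h0, h1, hpos, hmul, _⟩ := hN
  set t : LaurentSeries ℂ := HahnSeries.single (1 : ℤ) (1 : ℂ)
  set s : LaurentSeries ℂ := HahnSeries.single (-1 : ℤ) (1 : ℂ)
  have hts : t * s = 1 := by
    rw [HahnSeries.single_mul_single]
    norm_num [HahnSeries.coeff_single]
  have htA := single_mem_Ar r 1
  have hsA := single_mem_Ar r (-1)
  have hNt : N t ≤ r := by
    have := hbd t htA
    rwa [hybnorm_single, zpow_one] at this
  have hNs : N s ≤ r⁻¹ := by
    have := hbd s hsA
    rwa [hybnorm_single, zpow_neg_one] at this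
  have hprod : N t * N s = 1 := by
    rw [← hmul t htA s hsA, hts, h1]
  have hNt0 : 0 < N t := by
    rcases lt_or_eq_of_le (hpos t htA) with h | h
    · exact h
    · exfalso; rw [← h] at hprod; simp at hprod
  have hNs0 : 0 < N s := by
    rcases lt_or_eq_of_le (hpos s hsA) with h | h
    · exact h
    · exfalso; rw [← h] at hprod; simp at hprod
  have hge : r ≤ N t := by
    have h1' : N t = (N s)⁻¹ := by
      field_simp at hprod ⊢
      linarith [hprod]
    rw [h1', ← inv_inv r]
    exact inv_anti₀ hNs0 hNs
  linarith
end
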